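/- Set C₁ = C₂ = C₃ = −1 in the secular spin ODE system. Then: (a) the point (X,h) = (−4/√17, 0) is an equilibrium of the system if and only if C₄ = (7 − √17)/8; and (b) the point (X,h) = (4/√17, π) is an equilibrium of the system if and only if C₄ = (7 + √17)/8. These are the parameter values at which the off-axis equilibrium branches meet the axis sin h = 0 (the two Hamiltonian pitchfork bifurcation points). -/

import Mathlib

/-- With `C₁ = C₂ = C₃ = −1` in the secular spin ODE system:
(a) `(X,h) = (−4/√17, 0)` is an equilibrium iff `C₄ = (7 − √17)/8`;
(b) `(X,h) = (4/√17, π)` is an equilibrium iff `C₄ = (7 + √17)/8`.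
These are the two Hamiltonian pitchfork bifurcation values of `C₄`. -/
theorem stmt_8 (C₄ : ℝ)
    (f₁ f₂ : ℝ → ℝ → ℝ)
    (hf₁ : ∀ X h, f₁ X h = Real.sin h * ((-1) * X * Real.sqrt (1 - X ^ 2)
      + 4 * (-1) * Real.cos h * (1 - X ^ 2)))
    (hf₂ : ∀ X h, f₂ X h =
      (-1) * Real.cos h * (1 - 2 * X ^ 2) / Real.sqrt (1 - X ^ 2)
        - 2 * (-1) * X * Real.cos (2 * h) + (-1) + 2 * C₄ * X) :
    ((f₁ (-4 / Real.sqrt 17) 0 = 0 ∧ f₂ (-4 / Real.sqrt 17) 0 = 0)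
      ↔ C₄ = (7 - Real.sqrt 17) / 8)
    ∧ ((f₁ (4 / Real.sqrt 17) Real.pi = 0 ∧ f₂ (4 / Real.sqrt 17) Real.pi = 0)
      ↔ C₄ = (7 + Real.sqrt 17) / 8) := by
  have hspos : (0:ℝ) < Real.sqrt 17 := Real.sqrt_pos.mpr (by norm_num)
  have hs : Real.sqrt 17 ^ 2 = 17 := Real.sq_sqrt (by norm_num)
  set s := Real.sqrt 17 with hsdef
  have hsne : s ≠ 0 := ne_of_gt hspos
  have h1 : (1 : ℝ) - (-4 / s) ^ 2 = (1/s)^2 := by field_simp; nlinarith [hs]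
  have h2 : (1 : ℝ) - (4 / s) ^ 2 = (1/s)^2 := by field_simp; nlinarith [hs]
  have hsq : Real.sqrt ((1/s)^2) = 1/s := Real.sqrt_sq (by positivity)
  constructor
  · rw [hf₁, hf₂, h1, hsq]
    simp only [Real.sin_zero, Real.cos_zero, mul_zero, zero_mul]
    constructor
    · rintro ⟨-, h⟩
      field_simp at h
      have key : s^3 * (7 - s - 8*C₄) = 0 := by linear_combination s^3 * h + s^3 * hs
      have h3 : (7 : ℝ) - s - 8*C₄ = 0 := by
        rcases mul_eq_zero.mp key with h' | h'
        · exact absurd h' (by positivity)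
        · exact h'
      linarith
    · intro h
      subst h
      refine ⟨trivial, ?_⟩
      field_simp
      linear_combination (-8) * hs
  · rw [hf₁, hf₂, h2, hsq]
    simp only [Real.sin_pi, Real.cos_pi, zero_mul, Real.cos_two_pi]
    constructor
    · rintro ⟨-, h⟩
      field_simp at h
      have key : s^3 * (8*C₄ - 7 - s) = 0 := by linear_combination s^3 * h - s^3 * hs
      have h3 : (8 : ℝ)*C₄ - 7 - s = 0 := by
        rcases mul_eq_zero.mp key with h' | h'
        · exact absurd h' (by positivity)
        · exact h'
      linarith
    · intro h
      subst h
      refine ⟨trivial, ?_⟩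
      field_simp
      linear_combination 8 * hs
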